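/- The threshold protocol P_thr satisfies LayeredTermination. In particular, with L₀ = {(1,x,0) : c ≤ x ≤ vmax}, L₁ = {(1,x,1) : −vmax ≤ x < c}, N₀ = {(0,0,0)}, N₁ = {(0,0,1)}, the ordered partition (T₁, T₂) with T₁ = {t ∈ T : pre(t) ≠ ⟦q,r⟧ for all q ∈ L₀, r ∈ N₁} and T₂ = T ∖ T₁ witnesses LayeredTermination when c > 0, and the ordered partition (S₁, S₂) with S₁ = {t ∈ T : pre(t) ≠ ⟦q,r⟧ for all q ∈ L₁, r ∈ N₀} and S₂ = T ∖ S₁ witnesses it when c ≤ 0. -/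

import Mathlib

/-! Formalization of population protocols (Angluin et al.), following
"Towards Efficient Verification of Population Protocols". -/

namespace PopProt

/-- A transition `(p, q) ↦ (p', q')`. -/
abbrev PTrans (Q : Type*) := Q × Q × Q × Q

variable {Q : Type*} [Fintype Q] [DecidableEq Q]

/-- `pre t` is the multiset of the two states consumed by transition `t`. -/
def pre (t : PTrans Q) : Multiset Q := {t.1, t.2.1}

/-- `post t` is the multiset of the two states produced by transition `t`. -/
def post (t : PTrans Q) : Multiset Q := {t.2.2.1, t.2.2.2}

/-- A transition is silent if it cannot change the current configuration. -/
def SilentT (t : PTrans Q) : Prop := pre t = post t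

instance : DecidablePred (SilentT (Q := Q)) := fun t => by
  unfold SilentT; infer_instance

/-- Transitions of the form `(p, q) ↦ (p, q)`. -/
def IsSilentPair (t : PTrans Q) : Prop := ∃ p q : Q, t = (p, q, p, q)

instance : DecidablePred (IsSilentPair (Q := Q)) := fun t => by
  unfold IsSilentPair; infer_instance

/-- A population protocol with states `Q` and input alphabet `A`.
Configurations are multisets over `Q` of cardinality at least 2. -/
structure Protocol (Q A : Type*) [Fintype Q] [DecidableEq Q] [Fintype A] where
  T : Finset (PTrans Q)
  total : ∀ p q : Q, ∃ p' q' : Q, (p, q, p', q') ∈ T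
  inp : A → Q
  out : Q → Bool

/-- `C →t C'`. -/
def StepBy (t : PTrans Q) (C C' : Multiset Q) : Prop :=
  pre t ≤ C ∧ C' = C - pre t + post t

/-- One step of the protocol with transition set `T`. -/
def Step (T : Finset (PTrans Q)) (C C' : Multiset Q) : Prop :=
  ∃ t ∈ T, StepBy t C C'

/-- Reachability `C →* C'`. -/
def Reach (T : Finset (PTrans Q)) : Multiset Q → Multiset Q → Prop :=
  Relation.ReflTransGen (Step T)

/-- `C →w C'` for a finite sequence `w` of transitions. -/
def SeqStep (T : Finset (PTrans Q)) : List (PTrans Q) → Multiset Q → Multiset Q → Prop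
  | [], C, C' => C' = C
  | t :: w, C, C' => t ∈ T ∧ ∃ D, StepBy t C D ∧ SeqStep T w D C'

/-- An execution: an infinite sequence of configurations related by steps. -/
def IsExec (T : Finset (PTrans Q)) (e : ℕ → Multiset Q) : Prop :=
  2 ≤ Multiset.card (e 0) ∧ ∀ i, Step T (e i) (e (i + 1))

/-- Fairness: if a step `C → C'` is possible and `C` occurs infinitely often,
then the step is taken infinitely often. -/
def Fair (T : Finset (PTrans Q)) (e : ℕ → Multiset Q) : Prop :=
  ∀ C C' : Multiset Q, Step T C C' →
    {i | e i = C}.Infinite → {j | e j = C ∧ e (j + 1) = C'}.Infinite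

/-- An execution is silent if it is eventually constant. -/
def SilentExec (e : ℕ → Multiset Q) : Prop := ∃ n : ℕ, ∀ i ≥ n, e i = e n

/-- A configuration is terminal if every transition enabled at it is silent. -/
def Terminal (T : Finset (PTrans Q)) (C : Multiset Q) : Prop :=
  ∀ t ∈ T, pre t ≤ C → SilentT t

/-- `C` is a consensus configuration with output `b`. -/
def Consensus (out : Q → Bool) (C : Multiset Q) (b : Bool) : Prop :=
  ∀ q ∈ C, out q = b

/-- An execution stabilizes to `b`. -/
def Stabilizes (out : Q → Bool) (e : ℕ → Multiset Q) (b : Bool) : Prop :=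
  ∃ n : ℕ, ∀ i ≥ n, Consensus out (e i) b

variable {A : Type*} [Fintype A]

/-- The initial configuration determined by input `X`. -/
def init (P : Protocol Q A) (X : Multiset A) : Multiset Q := X.map P.inp

/-- A protocol is silent if every fair execution from every configuration is silent. -/
def IsSilentProtocol (P : Protocol Q A) : Prop :=
  ∀ e : ℕ → Multiset Q, IsExec P.T e → Fair P.T e → SilentExec e

/-- A protocol is well-specified if for every input every fair execution from the
corresponding initial configuration stabilizes to a common boolean value. -/
def WellSpecified (P : Protocol Q A) : Prop :=
  ∀ X : Multiset A, 2 ≤ Multiset.card X → ∃ b : Bool,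
    ∀ e : ℕ → Multiset Q, e 0 = init P X → (∀ i, Step P.T (e i) (e (i + 1))) →
      Fair P.T e → Stabilizes P.out e b

/-- A protocol computes the predicate `φ`. -/
def Computes (P : Protocol Q A) (φ : Multiset A → Bool) : Prop :=
  ∀ X : Multiset A, 2 ≤ Multiset.card X →
    ∀ e : ℕ → Multiset Q, e 0 = init P X → (∀ i, Step P.T (e i) (e (i + 1))) →
      Fair P.T e → Stabilizes P.out e (φ X)

/-- Termination: from every configuration some terminal configuration is reachable. -/
def Termination (P : Protocol Q A) : Prop :=
  ∀ C : Multiset Q, 2 ≤ Multiset.card C →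
    ∃ C' : Multiset Q, Reach P.T C C' ∧ Terminal P.T C'

/-- NoSplitTerminal: all terminal configurations reachable from an initial configuration
are consensus configurations with one common output. -/
def NoSplitTerminal (P : Protocol Q A) : Prop :=
  ∀ X : Multiset A, 2 ≤ Multiset.card X → ∃ b : Bool,
    ∀ C' : Multiset Q, Reach P.T (init P X) C' → Terminal P.T C' →
      Consensus P.out C' b

/-- All transitions of the form `(p, q) ↦ (p, q)`. -/
def silents (Q : Type*) [Fintype Q] [DecidableEq Q] : Finset (PTrans Q) :=
  Finset.univ.image fun pq : Q × Q => (pq.1, pq.2, pq.1, pq.2)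

/-- The transition set of the induced protocol `P[S]`. -/
def induced (S : Finset (PTrans Q)) : Finset (PTrans Q) := S ∪ silents Q

/-- `(Ts 0, …, Ts (n-1))` is an ordered partition witnessing LayeredTermination. -/
def LayeredWitness (P : Protocol Q A) (n : ℕ) (Ts : Fin n → Finset (PTrans Q)) : Prop :=
  (∀ i, (Ts i).Nonempty) ∧
  (∀ i j, i ≠ j → Disjoint (Ts i) (Ts j)) ∧
  Finset.univ.biUnion Ts = P.T ∧
  ∀ i : Fin n,
    (∀ e : ℕ → Multiset Q, IsExec (induced (Ts i)) e → SilentExec e) ∧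
    (∀ C C' : Multiset Q, 2 ≤ Multiset.card C →
      Reach (induced (Ts i)) C C' →
      Terminal (induced ((Finset.univ.filter fun j => j < i).biUnion Ts)) C →
      Terminal (induced ((Finset.univ.filter fun j => j < i).biUnion Ts)) C')

/-- LayeredTermination. -/
def LayeredTermination (P : Protocol Q A) : Prop :=
  ∃ (n : ℕ) (Ts : Fin n → Finset (PTrans Q)), LayeredWitness P n Ts

/-- `•R`, relative to the transition set `T`. -/
def preSetOf (T : Finset (PTrans Q)) (R : Finset Q) : Finset (PTrans Q) :=
  T.filter fun t => ∃ q ∈ R, q ∈ post t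

/-- `R•`, relative to the transition set `T`. -/
def postSetOf (T : Finset (PTrans Q)) (R : Finset Q) : Finset (PTrans Q) :=
  T.filter fun t => ∃ q ∈ R, q ∈ pre t

/-- `R` is a `U`-trap: `R• ∩ U ⊆ •R`. -/
def IsTrap (T U : Finset (PTrans Q)) (R : Finset Q) : Prop :=
  postSetOf T R ∩ U ⊆ preSetOf T R

/-- `R` is a `U`-siphon: `•R ∩ U ⊆ R•`. -/
def IsSiphon (T U : Finset (PTrans Q)) (R : Finset Q) : Prop :=
  preSetOf T R ∩ U ⊆ postSetOf T R

/-- The flow equations for `(C, C', x)`. -/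
def FlowEq (T : Finset (PTrans Q)) (C C' : Multiset Q) (x : PTrans Q → ℕ) : Prop :=
  ∀ q : Q, (C'.count q : ℤ) =
    (C.count q : ℤ) + ∑ t ∈ T, (x t : ℤ) * (((post t).count q : ℤ) - ((pre t).count q : ℤ))

/-- The support of `x` within `T`. -/
def suppIn (T : Finset (PTrans Q)) (x : PTrans Q → ℕ) : Finset (PTrans Q) :=
  T.filter fun t => x t ≠ 0

/-- Potential reachability `C ⇒ₓ C'` (flow equations plus trap and siphon constraints,
with `U = supp x`). -/
def PotReach (T : Finset (PTrans Q)) (C C' : Multiset Q) (x : PTrans Q → ℕ) : Prop :=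
  FlowEq T C C' x ∧
  (∀ R : Finset Q, IsTrap T (suppIn T x) R → (∀ q ∈ R, q ∉ C') →
    preSetOf T R ∩ suppIn T x = ∅) ∧
  (∀ R : Finset Q, IsSiphon T (suppIn T x) R → (∀ q ∈ R, q ∉ C) →
    postSetOf T R ∩ suppIn T x = ∅)

/-- StrongConsensus: all terminal configurations potentially reachable from an initial
configuration are consensus configurations with one common output. -/
def StrongConsensus (P : Protocol Q A) : Prop :=
  ∀ X : Multiset A, 2 ≤ Multiset.card X → ∃ b : Bool,
    ∀ (C' : Multiset Q) (x : PTrans Q → ℕ),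
      PotReach P.T (init P X) C' x → Terminal P.T C' → Consensus P.out C' b

/-- `C` is `U`-dead: no transition of `U` can change `C`. -/
def UDeadConf (U : Finset (PTrans Q)) (C : Multiset Q) : Prop :=
  ∀ t ∈ U, ∀ C' : Multiset Q, StepBy t C C' → C' = C

/-- The protocol with transitions `T` is `U`-dead: from every `U`-dead configuration,
every reachable configuration is `U`-dead. -/
def UDead (T U : Finset (PTrans Q)) : Prop :=
  ∀ C₀ : Multiset Q, 2 ≤ Multiset.card C₀ → UDeadConf U C₀ →
    ∀ C : Multiset Q, Reach T C₀ C → UDeadConf U C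

end PopProt
namespace PopProt

section Threshold

variable (k : ℕ) (a : Fin k → ℤ) (c : ℤ)

/-- `vmax = max(|a₁|, …, |a_k|, |c| + 1)`. -/
def vmax : ℤ := max ((Finset.univ.sup fun i : Fin k => (a i).natAbs : ℕ) : ℤ) (|c| + 1)

lemma vmax_pos : 0 < vmax k a c := by
  have h : (0 : ℤ) ≤ |c| := abs_nonneg c
  exact lt_max_of_lt_right (by omega)

/-- The value range `[-vmax, vmax]`. -/
abbrev Vr := ↥(Finset.Icc (-(vmax k a c)) (vmax k a c))

/-- States of the threshold protocol: a leader bit, a value and an opinion. -/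
abbrev Qthr := Bool × Vr k a c × Bool

/-- `f(m, n) = max(-vmax, min(vmax, m + n))`. -/
def fthr (m n : ℤ) : ℤ := max (-(vmax k a c)) (min (vmax k a c) (m + n))

/-- `g(m, n) = (m + n) - f(m, n)`. -/
def gthr (m n : ℤ) : ℤ := m + n - fthr k a c m n

/-- `b(m, n) = (f(m, n) < c)`. -/
def bthr (m n : ℤ) : Bool := decide (fthr k a c m n < c)

lemma fthr_mem (m n : ℤ) : fthr k a c m n ∈ Finset.Icc (-(vmax k a c)) (vmax k a c) := by
  have h := vmax_pos k a c
  simp only [Finset.mem_Icc, fthr]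
  exact ⟨le_max_left _ _, max_le (by omega) (min_le_left _ _)⟩

lemma gthr_mem (m n : ℤ) (hm : m ∈ Finset.Icc (-(vmax k a c)) (vmax k a c))
    (hn : n ∈ Finset.Icc (-(vmax k a c)) (vmax k a c)) :
    gthr k a c m n ∈ Finset.Icc (-(vmax k a c)) (vmax k a c) := by
  have h := vmax_pos k a c
  simp only [Finset.mem_Icc] at hm hn ⊢
  simp only [gthr, fthr]
  rw [max_def, min_def]
  split_ifs <;> omega

/-- `f` on the value range. -/
def fV (m n : Vr k a c) : Vr k a c := ⟨fthr k a c m n, fthr_mem k a c m n⟩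

/-- `g` on the value range. -/
def gV (m n : Vr k a c) : Vr k a c := ⟨gthr k a c m n, gthr_mem k a c m n m.2 n.2⟩

instance : DecidableEq (Vr k a c) := by unfold Vr; infer_instance

noncomputable instance : Fintype (Vr k a c) := by unfold Vr; infer_instance

instance : DecidableEq (Qthr k a c) := by infer_instance

noncomputable instance : Fintype (Qthr k a c) := by infer_instance

/-- Non-silent transitions of the threshold protocol:
`(1, n, o), (l, n', o') ↦ (1, f(n, n'), b(n, n')), (0, g(n, n'), b(n, n'))`. -/
def IsThrTrans (t : PTrans (Qthr k a c)) : Prop :=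
  ∃ (n n' : Vr k a c) (l o o' : Bool),
    t = ((true, n, o), (l, n', o'),
         (true, fV k a c n n', bthr k a c (n : ℤ) (n' : ℤ)),
         (false, gV k a c n n', bthr k a c (n : ℤ) (n' : ℤ)))

noncomputable instance : DecidablePred (IsThrTrans k a c) := fun t => by
  unfold IsThrTrans; infer_instance

/-- Transition set of the threshold protocol. -/
noncomputable def Tthr : Finset (PTrans (Qthr k a c)) :=
  Finset.univ.filter fun t => IsThrTrans k a c t ∨ IsSilentPair t

lemma a_mem (i : Fin k) : a i ∈ Finset.Icc (-(vmax k a c)) (vmax k a c) := by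
  have h1 : (a i).natAbs ≤ Finset.univ.sup fun j : Fin k => (a j).natAbs :=
    Finset.le_sup (f := fun j : Fin k => (a j).natAbs) (Finset.mem_univ i)
  have h2 : ((Finset.univ.sup fun j : Fin k => (a j).natAbs : ℕ) : ℤ) ≤ vmax k a c :=
    le_max_left _ _
  simp only [Finset.mem_Icc]
  omega

/-- The threshold protocol `P_thr` computing `a₁x₁ + ⋯ + a_kx_k < c`. -/
noncomputable def Pthr : Protocol (Qthr k a c) (Fin k) where
  T := Tthr k a c
  total := fun p q => ⟨p, q, by
    simp only [Tthr, Finset.mem_filter, Finset.mem_univ, true_and]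
    exact Or.inr ⟨p, q, rfl⟩⟩
  inp := fun i => (true, ⟨a i, a_mem k a c i⟩, decide (a i < c))
  out := fun q => q.2.2

/-- `val(C) = Σ_q C(q) · val(q)` where `val(ℓ, n, o) = n`. -/
def valC (C : Multiset (Qthr k a c)) : ℤ := (C.map fun q => ((q.2.1 : ℤ))).sum

/-- `C` contains a leader. -/
def hasLeader (C : Multiset (Qthr k a c)) : Prop := ∃ q ∈ C, q.1 = true

/-- The value `0` of the value range. -/
def zeroV : Vr k a c :=
  ⟨0, by have := vmax_pos k a c; simp only [Finset.mem_Icc]; omega⟩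

/-- `L₀ = {(1, x, 0) : c ≤ x ≤ vmax}`. -/
noncomputable def L0set : Finset (Qthr k a c) :=
  Finset.univ.filter fun q =>
    q.1 = true ∧ q.2.2 = false ∧ c ≤ (q.2.1 : ℤ) ∧ (q.2.1 : ℤ) ≤ vmax k a c

/-- `L₁ = {(1, x, 1) : -vmax ≤ x < c}`. -/
noncomputable def L1set : Finset (Qthr k a c) :=
  Finset.univ.filter fun q =>
    q.1 = true ∧ q.2.2 = true ∧ -(vmax k a c) ≤ (q.2.1 : ℤ) ∧ (q.2.1 : ℤ) < c

/-- `N₀ = {(0, 0, 0)}`. -/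
def N0set : Finset (Qthr k a c) := {(false, zeroV k a c, false)}

/-- `N₁ = {(0, 0, 1)}`. -/
def N1set : Finset (Qthr k a c) := {(false, zeroV k a c, true)}

/-- `T₁ = {t ∈ T : pre t ≠ ⟦q, r⟧ for all q ∈ L₀, r ∈ N₁}`. -/
noncomputable def T1thr : Finset (PTrans (Qthr k a c)) :=
  (Tthr k a c).filter fun t => ∀ q ∈ L0set k a c, ∀ r ∈ N1set k a c, pre t ≠ {q, r}

/-- `T₂ = T ∖ T₁`. -/
noncomputable def T2thr : Finset (PTrans (Qthr k a c)) := Tthr k a c \ T1thr k a c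

/-- `S₁ = {t ∈ T : pre t ≠ ⟦q, r⟧ for all q ∈ L₁, r ∈ N₀}`. -/
noncomputable def S1thr : Finset (PTrans (Qthr k a c)) :=
  (Tthr k a c).filter fun t => ∀ q ∈ L1set k a c, ∀ r ∈ N0set k a c, pre t ≠ {q, r}

/-- `S₂ = T ∖ S₁`. -/
noncomputable def S2thr : Finset (PTrans (Qthr k a c)) := Tthr k a c \ S1thr k a c

end Threshold

end PopProt
namespace PopProt

section Helpers

lemma pair_eq_pair' {α : Type*} {a b c d : α} :
    ({a, b} : Multiset α) = {c, d} ↔ (a = c ∧ b = d) ∨ (a = d ∧ b = c) := by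
  constructor
  · intro h
    rcases Multiset.cons_eq_cons.1 h with ⟨h1, h2⟩ | ⟨_, cs, h1, h2⟩
    · exact Or.inl ⟨h1, by simpa using h2⟩
    · rw [Multiset.singleton_eq_cons_iff] at h1
      obtain ⟨rfl, rfl⟩ := h1
      right
      simpa [eq_comm] using h2
  · rintro (⟨rfl, rfl⟩ | ⟨rfl, rfl⟩)
    · rfl
    · exact Multiset.cons_swap _ _ _

variable {Q : Type*} [DecidableEq Q]

lemma count_pair (x u v : Q) :
    Multiset.count x ({u, v} : Multiset Q)
      = (if x = u then 1 else 0) + (if x = v then 1 else 0) := by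
  rw [Multiset.insert_eq_cons, Multiset.count_cons, Multiset.count_singleton]
  omega

lemma two_mem_le {q1 q2 : Q} {C : Multiset Q} (h1 : q1 ∈ C) (h2 : q2 ∈ C) (hne : q1 ≠ q2) :
    ({q1, q2} : Multiset Q) ≤ C := by
  rw [Multiset.le_iff_count]
  intro x
  rw [count_pair]
  by_cases e1 : x = q1
  · subst e1
    have := Multiset.one_le_count_iff_mem.2 h1
    simp [Ne.symm, hne]
    omega
  · by_cases e2 : x = q2
    · subst e2
      have := Multiset.one_le_count_iff_mem.2 h2
      simp [e1]
      omega
    · simp [e1, e2]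

/-- weight sum of a configuration -/
def Wsum (w : Q → ℕ) (C : Multiset Q) : ℕ := (C.map w).sum

lemma Wsum_step {w : Q → ℕ} {t : PTrans Q} {C C' : Multiset Q} (h : StepBy t C C') :
    Wsum w C' + (w t.1 + w t.2.1) = Wsum w C + (w t.2.2.1 + w t.2.2.2) := by
  obtain ⟨hle, rfl⟩ := h
  have hC : C = (C - pre t) + pre t := (tsub_add_cancel_of_le hle).symm
  rw [Wsum, Wsum, Multiset.map_add, Multiset.sum_add]
  conv_rhs => rw [hC]
  rw [Multiset.map_add, Multiset.sum_add]
  simp [pre, post]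
  ring

lemma Wsum_step_lt {w : Q → ℕ} {t : PTrans Q} {C C' : Multiset Q} (h : StepBy t C C')
    (hw : w t.2.2.1 + w t.2.2.2 < w t.1 + w t.2.1) : Wsum w C' < Wsum w C := by
  have := Wsum_step (w := w) h
  omega

lemma StepBy_silent {t : PTrans Q} {C C' : Multiset Q} (hs : SilentT t) (h : StepBy t C C') :
    C' = C := by
  obtain ⟨hle, rfl⟩ := h
  rw [← hs, tsub_add_cancel_of_le hle]

lemma silentExec_of_measure {μ : Multiset Q → ℕ} :
    ∀ (N : ℕ) (e : ℕ → Multiset Q), (∀ i, e (i + 1) = e i ∨ μ (e (i + 1)) < μ (e i)) →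
      μ (e 0) ≤ N → SilentExec e := by
  intro N
  induction N with
  | zero =>
    intro e he h0
    have key : ∀ i, e i = e 0 := by
      intro i
      induction i with
      | zero => rfl
      | succ n ih =>
        rcases he n with h | h
        · rw [h, ih]
        · rw [ih] at h; omega
    exact ⟨0, fun i _ => key i⟩
  | succ N ih =>
    intro e he h0
    by_cases hc : ∀ i, e (i + 1) = e i
    · have key : ∀ i, e i = e 0 := by
        intro i
        induction i with
        | zero => rfl
        | succ n ihn => rw [hc n, ihn]
      exact ⟨0, fun i _ => key i⟩
    · push_neg at hc
      obtain ⟨j, hj⟩ := hc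
      have hmono : ∀ i, μ (e i) ≤ μ (e 0) := by
        intro i
        induction i with
        | zero => exact le_rfl
        | succ n ihn =>
          rcases he n with h | h
          · rw [h]; exact ihn
          · omega
      have hj1 : μ (e (j + 1)) ≤ N := by
        have h1 := hmono j
        rcases he j with h | h
        · exact absurd h hj
        · omega
      obtain ⟨m, hm⟩ := ih (fun i => e (i + (j + 1)))
        (fun i => by simpa [Nat.add_right_comm] using he (i + (j + 1))) (by simpa using hj1)
      refine ⟨m + (j + 1), fun i hi => ?_⟩
      have := hm (i - (j + 1)) (by omega)
      simpa [Nat.sub_add_cancel (by omega : j + 1 ≤ i)] using this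

lemma mem_silents {t : PTrans Q} [Fintype Q] (h : t ∈ silents Q) : SilentT t := by
  simp only [silents, Finset.mem_image, Finset.mem_univ, true_and] at h
  obtain ⟨pq, rfl⟩ := h
  rfl

set_option maxHeartbeats 1000000 in
lemma coreT1 (V cc N N' f g : ℤ) (o o' b : Bool)
    (hV : |cc| + 1 ≤ V) (h1 : -V ≤ N) (h2 : N ≤ V) (h3 : -V ≤ N') (h4 : N' ≤ V)
    (hf : f = max (-V) (min V (N + N'))) (hg : g = N + N' - f) (hb : b = decide (f < cc))
    (hexcl : ¬(o = false ∧ cc ≤ N ∧ N' = 0 ∧ o' = true))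
    (hns : ¬(N = f ∧ o = b ∧ N' = g ∧ o' = b)) :
    9 * g.natAbs + (if (0 < g ∧ b = true) ∨ (g ≤ 0 ∧ b = false) then 1 else 0)
    < 3 * (if o = decide (N < cc) then 0 else 1) + 9 * N'.natAbs
      + (if (0 < N' ∧ o' = true) ∨ (N' ≤ 0 ∧ o' = false) then 1 else 0) := by
  have hcc1 : cc ≤ |cc| := le_abs_self cc
  have hcc2 : -|cc| ≤ cc := neg_abs_le cc
  have hfc : (f = N + N' ∧ -V ≤ N + N' ∧ N + N' ≤ V) ∨ (f = V ∧ V < N + N')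
      ∨ (f = -V ∧ N + N' < -V) := by
    rcases le_total (N + N') V with h | h <;> rcases le_total (-V) (N + N') with h' | h' <;>
      simp [hf, max_def, min_def] <;> omega
  subst hb
  rcases lt_or_ge f cc with hfcc | hfcc <;>
    [rw [decide_eq_true hfcc] at hns ⊢; rw [decide_eq_false (not_lt.2 hfcc)] at hns ⊢] <;>
  (rcases lt_or_ge N cc with hNcc | hNcc <;>
    [rw [decide_eq_true hNcc]; rw [decide_eq_false (not_lt.2 hNcc)]]) <;>
  cases o <;> cases o' <;>
  simp only [Bool.true_eq_false, Bool.false_eq_true, and_true, and_false, true_and, false_and,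
    false_or, or_false, or_true, true_or, not_and, not_true, not_false_iff, and_self,
    if_true, if_false, not_lt, eq_self_iff_true, true_implies, false_implies,
    not_true_eq_false, not_false_eq_true, imp_false] at hexcl hns ⊢ <;>
  clear hf <;>
  split_ifs <;> omega

set_option maxHeartbeats 1000000 in
lemma coreS1 (V cc N N' f g : ℤ) (o o' b : Bool)
    (hV : |cc| + 1 ≤ V) (h1 : -V ≤ N) (h2 : N ≤ V) (h3 : -V ≤ N') (h4 : N' ≤ V)
    (hf : f = max (-V) (min V (N + N'))) (hg : g = N + N' - f) (hb : b = decide (f < cc))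
    (hexcl : ¬(o = true ∧ N < cc ∧ N' = 0 ∧ o' = false))
    (hns : ¬(N = f ∧ o = b ∧ N' = g ∧ o' = b)) :
    9 * g.natAbs + (if (0 ≤ g ∧ b = true) ∨ (g < 0 ∧ b = false) then 1 else 0)
    < 3 * (if o = decide (N < cc) then 0 else 1) + 9 * N'.natAbs
      + (if (0 ≤ N' ∧ o' = true) ∨ (N' < 0 ∧ o' = false) then 1 else 0) := by
  have hcc1 : cc ≤ |cc| := le_abs_self cc
  have hcc2 : -|cc| ≤ cc := neg_abs_le cc
  have hfc : (f = N + N' ∧ -V ≤ N + N' ∧ N + N' ≤ V) ∨ (f = V ∧ V < N + N')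
      ∨ (f = -V ∧ N + N' < -V) := by
    rcases le_total (N + N') V with h | h <;> rcases le_total (-V) (N + N') with h' | h' <;>
      simp [hf, max_def, min_def] <;> omega
  subst hb
  rcases lt_or_ge f cc with hfcc | hfcc <;>
    [rw [decide_eq_true hfcc] at hns ⊢; rw [decide_eq_false (not_lt.2 hfcc)] at hns ⊢] <;>
  (rcases lt_or_ge N cc with hNcc | hNcc <;>
    [rw [decide_eq_true hNcc]; rw [decide_eq_false (not_lt.2 hNcc)]]) <;>
  cases o <;> cases o' <;>
  simp only [Bool.true_eq_false, Bool.false_eq_true, and_true, and_false, true_and, false_and,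
    false_or, or_false, or_true, true_or, not_and, not_true, not_false_iff, and_self,
    if_true, if_false, not_lt, eq_self_iff_true, true_implies, false_implies,
    not_true_eq_false, not_false_eq_true, imp_false] at hexcl hns ⊢ <;>
  clear hf <;>
  split_ifs <;> omega

end Helpers

end PopProt
namespace PopProt

section ThresholdProofs

variable (k : ℕ) (a : Fin k → ℤ) (c : ℤ)

lemma abs_c_lt_vmax : |c| + 1 ≤ vmax k a c := le_max_right _ _

lemma fV_coe (n n' : Vr k a c) : ((fV k a c n n' : Vr k a c) : ℤ) = fthr k a c n n' := rfl

lemma gV_coe (n n' : Vr k a c) : ((gV k a c n n' : Vr k a c) : ℤ) = gthr k a c n n' := rfl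

lemma zeroV_coe : ((zeroV k a c : Vr k a c) : ℤ) = 0 := rfl

/-- measure weight for layer `T₁`. -/
def wT1 (q : Qthr k a c) : ℕ :=
  if q.1 = true then
    9 * (vmax k a c).toNat + 9 + 3 * (if q.2.2 = decide ((q.2.1 : ℤ) < c) then 0 else 1)
  else
    9 * ((q.2.1 : ℤ)).natAbs +
      (if (0 < (q.2.1 : ℤ) ∧ q.2.2 = true) ∨ ((q.2.1 : ℤ) ≤ 0 ∧ q.2.2 = false) then 1 else 0)

/-- measure weight for layer `S₁`. -/
def wS1 (q : Qthr k a c) : ℕ :=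
  if q.1 = true then
    9 * (vmax k a c).toNat + 9 + 3 * (if q.2.2 = decide ((q.2.1 : ℤ) < c) then 0 else 1)
  else
    9 * ((q.2.1 : ℤ)).natAbs +
      (if (0 ≤ (q.2.1 : ℤ) ∧ q.2.2 = true) ∨ ((q.2.1 : ℤ) < 0 ∧ q.2.2 = false) then 1 else 0)

set_option maxHeartbeats 1000000 in
lemma wT1_trans_lt (n n' : Vr k a c) (l o o' : Bool)
    (ht : (((true, n, o), (l, n', o'),
        (true, fV k a c n n', bthr k a c (n : ℤ) (n' : ℤ)),
        (false, gV k a c n n', bthr k a c (n : ℤ) (n' : ℤ))) : PTrans (Qthr k a c))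
        ∈ T1thr k a c)
    (hns : ¬ SilentT (((true, n, o), (l, n', o'),
        (true, fV k a c n n', bthr k a c (n : ℤ) (n' : ℤ)),
        (false, gV k a c n n', bthr k a c (n : ℤ) (n' : ℤ))) : PTrans (Qthr k a c))) :
    wT1 k a c (true, fV k a c n n', bthr k a c (n : ℤ) (n' : ℤ))
      + wT1 k a c (false, gV k a c n n', bthr k a c (n : ℤ) (n' : ℤ))
    < wT1 k a c (true, n, o) + wT1 k a c (l, n', o') := by
  have hV := abs_c_lt_vmax k a c
  have hn := Finset.mem_Icc.1 n.2
  have hn' := Finset.mem_Icc.1 n'.2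
  have hg := Finset.mem_Icc.1 (gV k a c n n').2
  rw [gV_coe] at hg
  cases l
  · -- second agent is a non-leader: use coreT1
    have hexcl : ¬(o = false ∧ c ≤ (n : ℤ) ∧ (n' : ℤ) = 0 ∧ o' = true) := by
      rintro ⟨ho, hcn, hn0, ho'⟩
      rw [T1thr, Finset.mem_filter] at ht
      have hz : n' = zeroV k a c := Subtype.ext (by simpa [zeroV] using hn0)
      refine ht.2 (true, n, o) ?_ (false, zeroV k a c, true) ?_ ?_
      · simp only [L0set, Finset.mem_filter, Finset.mem_univ, true_and]
        exact ⟨ho, hcn, hn.2⟩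
      · simp [N1set]
      · rw [← hz, ← ho']
        rfl
    have hnseq : ¬((n : ℤ) = fthr k a c (n : ℤ) (n' : ℤ) ∧ o = bthr k a c (n : ℤ) (n' : ℤ)
        ∧ (n' : ℤ) = gthr k a c (n : ℤ) (n' : ℤ) ∧ o' = bthr k a c (n : ℤ) (n' : ℤ)) := by
      rintro ⟨e1, e2, e3, e4⟩
      apply hns
      have c1 : ((true, fV k a c n n', bthr k a c (n : ℤ) (n' : ℤ)) : Qthr k a c)
          = (true, n, o) := by
        have hfe : fV k a c n n' = n := Subtype.ext e1.symm
        rw [hfe, ← e2]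
      have c2 : ((false, gV k a c n n', bthr k a c (n : ℤ) (n' : ℤ)) : Qthr k a c)
          = (false, n', o') := by
        have hge : gV k a c n n' = n' := Subtype.ext e3.symm
        rw [hge, ← e4]
      show ({((true : Bool), n, o), ((false : Bool), n', o')} : Multiset (Qthr k a c))
          = {(true, fV k a c n n', bthr k a c (n : ℤ) (n' : ℤ)),
             (false, gV k a c n n', bthr k a c (n : ℤ) (n' : ℤ))}
      rw [c1, c2]
    have key := coreT1 (vmax k a c) c (n : ℤ) (n' : ℤ)
      (fthr k a c (n : ℤ) (n' : ℤ)) (gthr k a c (n : ℤ) (n' : ℤ)) o o'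
      (bthr k a c (n : ℤ) (n' : ℤ)) hV hn.1 hn.2 hn'.1 hn'.2 rfl rfl rfl hexcl hnseq
    rw [show wT1 k a c (true, fV k a c n n', bthr k a c (n : ℤ) (n' : ℤ)) = 9 * (vmax k a c).toNat + 9 from by
        unfold wT1; rw [if_pos rfl, if_pos (show ((true, fV k a c n n', bthr k a c (n : ℤ) (n' : ℤ)) : Qthr k a c).2.2 = decide ((((true, fV k a c n n', bthr k a c (n : ℤ) (n' : ℤ)) : Qthr k a c).2.1 : ℤ) < c) from rfl)],
      show wT1 k a c (false, gV k a c n n', bthr k a c (n : ℤ) (n' : ℤ)) = 9 * (gthr k a c (n : ℤ) (n' : ℤ)).natAbs +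
        (if (0 < gthr k a c (n : ℤ) (n' : ℤ) ∧ bthr k a c (n : ℤ) (n' : ℤ) = true) ∨ (gthr k a c (n : ℤ) (n' : ℤ) ≤ 0 ∧ bthr k a c (n : ℤ) (n' : ℤ) = false) then 1 else 0) from rfl]
    simp only [wT1, fV_coe, gV_coe]
    simp only [eq_self_iff_true, if_true, Bool.false_eq_true, if_false]
    simp only [bthr] at key ⊢
    linarith [key]
  · -- second agent is a leader: leader count decreases
    rw [show wT1 k a c (true, fV k a c n n', bthr k a c (n : ℤ) (n' : ℤ)) = 9 * (vmax k a c).toNat + 9 from by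
        unfold wT1; rw [if_pos rfl, if_pos (show ((true, fV k a c n n', bthr k a c (n : ℤ) (n' : ℤ)) : Qthr k a c).2.2 = decide ((((true, fV k a c n n', bthr k a c (n : ℤ) (n' : ℤ)) : Qthr k a c).2.1 : ℤ) < c) from rfl)],
      show wT1 k a c (false, gV k a c n n', bthr k a c (n : ℤ) (n' : ℤ)) = 9 * (gthr k a c (n : ℤ) (n' : ℤ)).natAbs +
        (if (0 < gthr k a c (n : ℤ) (n' : ℤ) ∧ bthr k a c (n : ℤ) (n' : ℤ) = true) ∨ (gthr k a c (n : ℤ) (n' : ℤ) ≤ 0 ∧ bthr k a c (n : ℤ) (n' : ℤ) = false) then 1 else 0) from rfl]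
    simp only [wT1, fV_coe, gV_coe]
    simp only [eq_self_iff_true, if_true, Bool.false_eq_true, if_false]
    split_ifs <;> omega

set_option maxHeartbeats 1000000 in
lemma wS1_trans_lt (n n' : Vr k a c) (l o o' : Bool)
    (ht : (((true, n, o), (l, n', o'),
        (true, fV k a c n n', bthr k a c (n : ℤ) (n' : ℤ)),
        (false, gV k a c n n', bthr k a c (n : ℤ) (n' : ℤ))) : PTrans (Qthr k a c))
        ∈ S1thr k a c)
    (hns : ¬ SilentT (((true, n, o), (l, n', o'),
        (true, fV k a c n n', bthr k a c (n : ℤ) (n' : ℤ)),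
        (false, gV k a c n n', bthr k a c (n : ℤ) (n' : ℤ))) : PTrans (Qthr k a c))) :
    wS1 k a c (true, fV k a c n n', bthr k a c (n : ℤ) (n' : ℤ))
      + wS1 k a c (false, gV k a c n n', bthr k a c (n : ℤ) (n' : ℤ))
    < wS1 k a c (true, n, o) + wS1 k a c (l, n', o') := by
  have hV := abs_c_lt_vmax k a c
  have hn := Finset.mem_Icc.1 n.2
  have hn' := Finset.mem_Icc.1 n'.2
  have hg := Finset.mem_Icc.1 (gV k a c n n').2
  rw [gV_coe] at hg
  cases l
  · have hexcl : ¬(o = true ∧ (n : ℤ) < c ∧ (n' : ℤ) = 0 ∧ o' = false) := by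
      rintro ⟨ho, hcn, hn0, ho'⟩
      rw [S1thr, Finset.mem_filter] at ht
      have hz : n' = zeroV k a c := Subtype.ext (by simpa [zeroV] using hn0)
      refine ht.2 (true, n, o) ?_ (false, zeroV k a c, false) ?_ ?_
      · simp only [L1set, Finset.mem_filter, Finset.mem_univ, true_and]
        exact ⟨ho, hn.1, hcn⟩
      · simp [N0set]
      · rw [← hz, ← ho']
        rfl
    have hnseq : ¬((n : ℤ) = fthr k a c (n : ℤ) (n' : ℤ) ∧ o = bthr k a c (n : ℤ) (n' : ℤ)
        ∧ (n' : ℤ) = gthr k a c (n : ℤ) (n' : ℤ) ∧ o' = bthr k a c (n : ℤ) (n' : ℤ)) := by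
      rintro ⟨e1, e2, e3, e4⟩
      apply hns
      have c1 : ((true, fV k a c n n', bthr k a c (n : ℤ) (n' : ℤ)) : Qthr k a c)
          = (true, n, o) := by
        have hfe : fV k a c n n' = n := Subtype.ext e1.symm
        rw [hfe, ← e2]
      have c2 : ((false, gV k a c n n', bthr k a c (n : ℤ) (n' : ℤ)) : Qthr k a c)
          = (false, n', o') := by
        have hge : gV k a c n n' = n' := Subtype.ext e3.symm
        rw [hge, ← e4]
      show ({((true : Bool), n, o), ((false : Bool), n', o')} : Multiset (Qthr k a c))
          = {(true, fV k a c n n', bthr k a c (n : ℤ) (n' : ℤ)),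
             (false, gV k a c n n', bthr k a c (n : ℤ) (n' : ℤ))}
      rw [c1, c2]
    have key := coreS1 (vmax k a c) c (n : ℤ) (n' : ℤ)
      (fthr k a c (n : ℤ) (n' : ℤ)) (gthr k a c (n : ℤ) (n' : ℤ)) o o'
      (bthr k a c (n : ℤ) (n' : ℤ)) hV hn.1 hn.2 hn'.1 hn'.2 rfl rfl rfl hexcl hnseq
    rw [show wS1 k a c (true, fV k a c n n', bthr k a c (n : ℤ) (n' : ℤ)) = 9 * (vmax k a c).toNat + 9 from by
        unfold wS1; rw [if_pos rfl, if_pos (show ((true, fV k a c n n', bthr k a c (n : ℤ) (n' : ℤ)) : Qthr k a c).2.2 = decide ((((true, fV k a c n n', bthr k a c (n : ℤ) (n' : ℤ)) : Qthr k a c).2.1 : ℤ) < c) from rfl)],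
      show wS1 k a c (false, gV k a c n n', bthr k a c (n : ℤ) (n' : ℤ)) = 9 * (gthr k a c (n : ℤ) (n' : ℤ)).natAbs +
        (if (0 ≤ gthr k a c (n : ℤ) (n' : ℤ) ∧ bthr k a c (n : ℤ) (n' : ℤ) = true) ∨ (gthr k a c (n : ℤ) (n' : ℤ) < 0 ∧ bthr k a c (n : ℤ) (n' : ℤ) = false) then 1 else 0) from rfl]
    simp only [wS1, fV_coe, gV_coe]
    simp only [eq_self_iff_true, if_true, Bool.false_eq_true, if_false]
    simp only [bthr] at key ⊢
    linarith [key]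
  · rw [show wS1 k a c (true, fV k a c n n', bthr k a c (n : ℤ) (n' : ℤ)) = 9 * (vmax k a c).toNat + 9 from by
        unfold wS1; rw [if_pos rfl, if_pos (show ((true, fV k a c n n', bthr k a c (n : ℤ) (n' : ℤ)) : Qthr k a c).2.2 = decide ((((true, fV k a c n n', bthr k a c (n : ℤ) (n' : ℤ)) : Qthr k a c).2.1 : ℤ) < c) from rfl)],
      show wS1 k a c (false, gV k a c n n', bthr k a c (n : ℤ) (n' : ℤ)) = 9 * (gthr k a c (n : ℤ) (n' : ℤ)).natAbs +
        (if (0 ≤ gthr k a c (n : ℤ) (n' : ℤ) ∧ bthr k a c (n : ℤ) (n' : ℤ) = true) ∨ (gthr k a c (n : ℤ) (n' : ℤ) < 0 ∧ bthr k a c (n : ℤ) (n' : ℤ) = false) then 1 else 0) from rfl]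
    simp only [wS1, fV_coe, gV_coe]
    simp only [eq_self_iff_true, if_true, Bool.false_eq_true, if_false]
    split_ifs <;> omega

lemma stepT1_measure {C C' : Multiset (Qthr k a c)}
    (h : Step (induced (T1thr k a c)) C C') :
    C' = C ∨ Wsum (wT1 k a c) C' < Wsum (wT1 k a c) C := by
  obtain ⟨t, ht, hstep⟩ := h
  rcases Finset.mem_union.1 ht with ht1 | hts
  · have htT : t ∈ Tthr k a c := (Finset.mem_filter.1 ht1).1
    rcases (Finset.mem_filter.1 htT).2 with hthr | hsil
    · obtain ⟨n, n', l, o, o', rfl⟩ := hthr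
      by_cases hs : SilentT (((true, n, o), (l, n', o'),
          (true, fV k a c n n', bthr k a c (n : ℤ) (n' : ℤ)),
          (false, gV k a c n n', bthr k a c (n : ℤ) (n' : ℤ))) : PTrans (Qthr k a c))
      · exact Or.inl (StepBy_silent hs hstep)
      · exact Or.inr (Wsum_step_lt hstep (wT1_trans_lt k a c n n' l o o' ht1 hs))
    · obtain ⟨p, q, rfl⟩ := hsil
      exact Or.inl (StepBy_silent (show SilentT ((p,q,p,q) : PTrans (Qthr k a c)) from rfl) hstep)
  · exact Or.inl (StepBy_silent (mem_silents hts) hstep)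

lemma stepS1_measure {C C' : Multiset (Qthr k a c)}
    (h : Step (induced (S1thr k a c)) C C') :
    C' = C ∨ Wsum (wS1 k a c) C' < Wsum (wS1 k a c) C := by
  obtain ⟨t, ht, hstep⟩ := h
  rcases Finset.mem_union.1 ht with ht1 | hts
  · have htT : t ∈ Tthr k a c := (Finset.mem_filter.1 ht1).1
    rcases (Finset.mem_filter.1 htT).2 with hthr | hsil
    · obtain ⟨n, n', l, o, o', rfl⟩ := hthr
      by_cases hs : SilentT (((true, n, o), (l, n', o'),
          (true, fV k a c n n', bthr k a c (n : ℤ) (n' : ℤ)),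
          (false, gV k a c n n', bthr k a c (n : ℤ) (n' : ℤ))) : PTrans (Qthr k a c))
      · exact Or.inl (StepBy_silent hs hstep)
      · exact Or.inr (Wsum_step_lt hstep (wS1_trans_lt k a c n n' l o o' ht1 hs))
    · obtain ⟨p, q, rfl⟩ := hsil
      exact Or.inl (StepBy_silent (show SilentT ((p,q,p,q) : PTrans (Qthr k a c)) from rfl) hstep)
  · exact Or.inl (StepBy_silent (mem_silents hts) hstep)

lemma fthr_zero (n : Vr k a c) : fthr k a c (n : ℤ) 0 = (n : ℤ) := by
  have hn := Finset.mem_Icc.1 n.2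
  simp only [fthr, add_zero]
  rw [min_eq_right hn.2, max_eq_right hn.1]

lemma fV_zero (n : Vr k a c) : fV k a c n (zeroV k a c) = n :=
  Subtype.ext (fthr_zero k a c n)

lemma gV_zero (n : Vr k a c) : gV k a c n (zeroV k a c) = zeroV k a c := by
  apply Subtype.ext
  show gthr k a c (n : ℤ) 0 = 0
  rw [gthr, fthr_zero]
  ring

lemma bthr_zero_ge (n : Vr k a c) (h : c ≤ (n : ℤ)) :
    bthr k a c (n : ℤ) ((zeroV k a c : Vr k a c) : ℤ) = false := by
  rw [bthr, zeroV_coe, fthr_zero]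
  exact decide_eq_false (not_lt.2 h)

lemma bthr_zero_lt (n : Vr k a c) (h : (n : ℤ) < c) :
    bthr k a c (n : ℤ) ((zeroV k a c : Vr k a c) : ℤ) = true := by
  rw [bthr, zeroV_coe, fthr_zero]
  exact decide_eq_true h

lemma T2_elim (t : PTrans (Qthr k a c)) (ht : t ∈ T2thr k a c) :
    IsSilentPair t ∨ ∃ n : Vr k a c, c ≤ (n : ℤ) ∧
      t = ((true, n, false), (false, zeroV k a c, true),
           (true, n, false), (false, zeroV k a c, false)) := by
  rw [T2thr, Finset.mem_sdiff] at ht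
  obtain ⟨htT, hnT1⟩ := ht
  rcases (Finset.mem_filter.1 htT).2 with hthr | hsil
  · right
    obtain ⟨n, n', l, o, o', rfl⟩ := hthr
    have hcond : ¬ (∀ q ∈ L0set k a c, ∀ r ∈ N1set k a c,
        pre (((true, n, o), (l, n', o'),
          (true, fV k a c n n', bthr k a c (n : ℤ) (n' : ℤ)),
          (false, gV k a c n n', bthr k a c (n : ℤ) (n' : ℤ))) : PTrans (Qthr k a c))
          ≠ {q, r}) := by
      intro hcond
      exact hnT1 (Finset.mem_filter.2 ⟨htT, hcond⟩)
    push_neg at hcond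
    obtain ⟨q, hq, r, hr, heq⟩ := hcond
    rw [N1set, Finset.mem_singleton] at hr
    subst hr
    rw [L0set, Finset.mem_filter] at hq
    obtain ⟨-, hq1, hq2, hq3, -⟩ := hq
    have heq' : ({((true : Bool), n, o), (l, n', o')} : Multiset (Qthr k a c))
        = {q, (false, zeroV k a c, true)} := heq
    rcases pair_eq_pair'.1 heq' with ⟨e1, e2⟩ | ⟨e1, e2⟩
    · obtain ⟨rfl, rfl, rfl⟩ : l = false ∧ n' = zeroV k a c ∧ o' = true := by
        simp only [Prod.mk.injEq] at e2
        exact ⟨e2.1, e2.2.1, e2.2.2⟩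
      have ho : o = false := by rw [← e1] at hq2; exact hq2
      have hcn : c ≤ (n : ℤ) := by rw [← e1] at hq3; exact hq3
      subst ho
      refine ⟨n, hcn, ?_⟩
      rw [fV_zero, gV_zero, bthr_zero_ge k a c n hcn]
    · exfalso
      simp at e1
  · exact Or.inl hsil

lemma S2_elim (t : PTrans (Qthr k a c)) (ht : t ∈ S2thr k a c) :
    IsSilentPair t ∨ ∃ n : Vr k a c, (n : ℤ) < c ∧
      t = ((true, n, true), (false, zeroV k a c, false),
           (true, n, true), (false, zeroV k a c, true)) := by
  rw [S2thr, Finset.mem_sdiff] at ht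
  obtain ⟨htT, hnT1⟩ := ht
  rcases (Finset.mem_filter.1 htT).2 with hthr | hsil
  · right
    obtain ⟨n, n', l, o, o', rfl⟩ := hthr
    have hcond : ¬ (∀ q ∈ L1set k a c, ∀ r ∈ N0set k a c,
        pre (((true, n, o), (l, n', o'),
          (true, fV k a c n n', bthr k a c (n : ℤ) (n' : ℤ)),
          (false, gV k a c n n', bthr k a c (n : ℤ) (n' : ℤ))) : PTrans (Qthr k a c))
          ≠ {q, r}) := by
      intro hcond
      exact hnT1 (Finset.mem_filter.2 ⟨htT, hcond⟩)
    push_neg at hcond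
    obtain ⟨q, hq, r, hr, heq⟩ := hcond
    rw [N0set, Finset.mem_singleton] at hr
    subst hr
    rw [L1set, Finset.mem_filter] at hq
    obtain ⟨-, hq1, hq2, -, hq4⟩ := hq
    have heq' : ({((true : Bool), n, o), (l, n', o')} : Multiset (Qthr k a c))
        = {q, (false, zeroV k a c, false)} := heq
    rcases pair_eq_pair'.1 heq' with ⟨e1, e2⟩ | ⟨e1, e2⟩
    · obtain ⟨rfl, rfl, rfl⟩ : l = false ∧ n' = zeroV k a c ∧ o' = false := by
        simp only [Prod.mk.injEq] at e2
        exact ⟨e2.1, e2.2.1, e2.2.2⟩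
      have ho : o = true := by rw [← e1] at hq2; exact hq2
      have hcn : (n : ℤ) < c := by rw [← e1] at hq4; exact hq4
      subst ho
      refine ⟨n, hcn, ?_⟩
      rw [fV_zero, gV_zero, bthr_zero_lt k a c n hcn]
    · exfalso
      simp at e1
  · exact Or.inl hsil

/-- measure weight for layer `T₂`: number of agents in state `(0,0,1)`. -/
def w2T (q : Qthr k a c) : ℕ := if q = (false, zeroV k a c, true) then 1 else 0

/-- measure weight for layer `S₂`: number of agents in state `(0,0,0)`. -/
def w2S (q : Qthr k a c) : ℕ := if q = (false, zeroV k a c, false) then 1 else 0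

lemma stepT2_measure {C C' : Multiset (Qthr k a c)}
    (h : Step (induced (T2thr k a c)) C C') :
    C' = C ∨ Wsum (w2T k a c) C' < Wsum (w2T k a c) C := by
  obtain ⟨t, ht, hstep⟩ := h
  rcases Finset.mem_union.1 ht with ht2 | hts
  · rcases T2_elim k a c t ht2 with hsil | ⟨n, hcn, rfl⟩
    · obtain ⟨p, q, rfl⟩ := hsil
      exact Or.inl (StepBy_silent (show SilentT ((p,q,p,q) : PTrans (Qthr k a c)) from rfl) hstep)
    · refine Or.inr (Wsum_step_lt hstep ?_)
      simp [w2T]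
  · exact Or.inl (StepBy_silent (mem_silents hts) hstep)

lemma stepS2_measure {C C' : Multiset (Qthr k a c)}
    (h : Step (induced (S2thr k a c)) C C') :
    C' = C ∨ Wsum (w2S k a c) C' < Wsum (w2S k a c) C := by
  obtain ⟨t, ht, hstep⟩ := h
  rcases Finset.mem_union.1 ht with ht2 | hts
  · rcases S2_elim k a c t ht2 with hsil | ⟨n, hcn, rfl⟩
    · obtain ⟨p, q, rfl⟩ := hsil
      exact Or.inl (StepBy_silent (show SilentT ((p,q,p,q) : PTrans (Qthr k a c)) from rfl) hstep)
    · refine Or.inr (Wsum_step_lt hstep ?_)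
      simp [w2S]
  · exact Or.inl (StepBy_silent (mem_silents hts) hstep)

lemma no_two_leaders (T' : Finset (PTrans (Qthr k a c)))
    (hT' : ∀ (v1 v2 : Vr k a c) (o1 o2 : Bool),
      (((true, v1, o1), (true, v2, o2),
        (true, fV k a c v1 v2, bthr k a c (v1 : ℤ) (v2 : ℤ)),
        (false, gV k a c v1 v2, bthr k a c (v1 : ℤ) (v2 : ℤ))) : PTrans (Qthr k a c)) ∈ T')
    (C : Multiset (Qthr k a c)) (hterm : Terminal (induced T') C)
    (q1 q2 : Qthr k a c) (h1 : q1.1 = true) (h2 : q2.1 = true)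
    (hle : ({q1, q2} : Multiset (Qthr k a c)) ≤ C) : False := by
  obtain ⟨b1, v1, o1⟩ := q1
  obtain ⟨b2, v2, o2⟩ := q2
  simp only at h1 h2
  subst h1
  subst h2
  have hu := hterm _ (Finset.mem_union_left _ (hT' v1 v2 o1 o2)) hle
  rcases pair_eq_pair'.1 hu with ⟨e1, e2⟩ | ⟨e1, e2⟩
  · simp at e2
  · simp at e1

lemma leaderpair_mem_T1 (v1 v2 : Vr k a c) (o1 o2 : Bool) :
    (((true, v1, o1), (true, v2, o2),
      (true, fV k a c v1 v2, bthr k a c (v1 : ℤ) (v2 : ℤ)),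
      (false, gV k a c v1 v2, bthr k a c (v1 : ℤ) (v2 : ℤ))) : PTrans (Qthr k a c))
      ∈ T1thr k a c := by
  refine Finset.mem_filter.2 ⟨Finset.mem_filter.2 ⟨Finset.mem_univ _,
    Or.inl ⟨v1, v2, true, o1, o2, rfl⟩⟩, ?_⟩
  intro q hq r hr heq
  rw [N1set, Finset.mem_singleton] at hr
  subst hr
  rcases pair_eq_pair'.1 heq with ⟨e1, e2⟩ | ⟨e1, e2⟩
  · simp at e2
  · simp at e1

lemma leaderpair_mem_S1 (v1 v2 : Vr k a c) (o1 o2 : Bool) :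
    (((true, v1, o1), (true, v2, o2),
      (true, fV k a c v1 v2, bthr k a c (v1 : ℤ) (v2 : ℤ)),
      (false, gV k a c v1 v2, bthr k a c (v1 : ℤ) (v2 : ℤ))) : PTrans (Qthr k a c))
      ∈ S1thr k a c := by
  refine Finset.mem_filter.2 ⟨Finset.mem_filter.2 ⟨Finset.mem_univ _,
    Or.inl ⟨v1, v2, true, o1, o2, rfl⟩⟩, ?_⟩
  intro q hq r hr heq
  rw [N0set, Finset.mem_singleton] at hr
  subst hr
  rcases pair_eq_pair'.1 heq with ⟨e1, e2⟩ | ⟨e1, e2⟩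
  · simp at e2
  · simp at e1

lemma term_preserve_aux (T' : Finset (PTrans (Qthr k a c)))
    (hT'sub : T' ⊆ Tthr k a c)
    (hT'L : ∀ (v1 v2 : Vr k a c) (o1 o2 : Bool),
      (((true, v1, o1), (true, v2, o2),
        (true, fV k a c v1 v2, bthr k a c (v1 : ℤ) (v2 : ℤ)),
        (false, gV k a c v1 v2, bthr k a c (v1 : ℤ) (v2 : ℤ))) : PTrans (Qthr k a c)) ∈ T')
    (A Bin Bout : Qthr k a c)
    (hA : A.1 = true) (hBin : Bin.1 = false) (hBout : Bout.1 = false)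
    (hsil : ∀ (m m₂ : Vr k a c) (l₂ p p₂ : Bool),
      ((true, m, p) : Qthr k a c) = A → ((l₂, m₂, p₂) : Qthr k a c) = Bout →
      SilentT (((true, m, p), (l₂, m₂, p₂),
        (true, fV k a c m m₂, bthr k a c (m : ℤ) (m₂ : ℤ)),
        (false, gV k a c m m₂, bthr k a c (m : ℤ) (m₂ : ℤ))) : PTrans (Qthr k a c)))
    (C C' : Multiset (Qthr k a c)) (hterm : Terminal (induced T') C)
    (hP : ({A, Bin} : Multiset (Qthr k a c)) ≤ C)
    (hC' : C' = C - {A, Bin} + {A, Bout}) :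
    Terminal (induced T') C' := by
  have hANBin : A ≠ Bin := fun h => by rw [h] at hA; rw [hA] at hBin; exact Bool.noConfusion hBin
  have hANBout : A ≠ Bout := fun h => by rw [h] at hA; rw [hA] at hBout; exact Bool.noConfusion hBout
  have hcnt : ∀ x, Multiset.count x C' = Multiset.count x C
      - Multiset.count x ({A, Bin} : Multiset (Qthr k a c))
      + Multiset.count x ({A, Bout} : Multiset (Qthr k a c)) := by
    intro x
    rw [hC', Multiset.count_add, Multiset.count_sub]
  intro s hs hpres
  rcases Finset.mem_union.1 hs with hs1 | hss
  swap
  · exact mem_silents hss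
  have hsT := hT'sub hs1
  rcases (Finset.mem_filter.1 hsT).2 with hthr | hsil'
  swap
  · obtain ⟨p, q, rfl⟩ := hsil'
    rfl
  obtain ⟨m, m₂, l₂, p, p₂, rfl⟩ := hthr
  by_cases hB : ((l₂, m₂, p₂) : Qthr k a c) = Bout
  · -- uses the new token: the leader must be the unique leader A
    have hmem1 : ((true, m, p) : Qthr k a c) ∈ C' :=
      Multiset.mem_of_le hpres (by simp [pre])
    have hAC : A ∈ C := Multiset.mem_of_le hP (by simp)
    have heq1 : ((true, m, p) : Qthr k a c) = A := by
      by_contra hne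
      have hmNBin : ((true, m, p) : Qthr k a c) ≠ Bin := fun h => by
        rw [← h] at hBin; exact Bool.noConfusion hBin
      have hmNBout : ((true, m, p) : Qthr k a c) ≠ Bout := fun h => by
        rw [← h] at hBout; exact Bool.noConfusion hBout
      have hmemC : ((true, m, p) : Qthr k a c) ∈ C := by
        rw [← Multiset.count_pos] at hmem1 ⊢
        rw [hcnt, count_pair, count_pair] at hmem1
        simp only [if_neg hne, if_neg hmNBin, if_neg hmNBout] at hmem1
        omega
      exact no_two_leaders k a c T' hT'L C hterm _ A rfl hA
        (two_mem_le hmemC hAC hne)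
    exact hsil m m₂ l₂ p p₂ heq1 hB
  · -- does not use the new token: already enabled in C
    have hleC : pre (((true, m, p), (l₂, m₂, p₂),
        (true, fV k a c m m₂, bthr k a c (m : ℤ) (m₂ : ℤ)),
        (false, gV k a c m m₂, bthr k a c (m : ℤ) (m₂ : ℤ))) : PTrans (Qthr k a c)) ≤ C := by
      rw [Multiset.le_iff_count]
      intro x
      have h1 := Multiset.le_iff_count.1 hpres x
      by_cases hx : x = Bout
      · have hmNBout : ((true, m, p) : Qthr k a c) ≠ Bout := fun h => by
          rw [← h] at hBout; exact Bool.noConfusion hBout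
        have h1x : ¬(x = ((true, m, p) : Qthr k a c)) := fun h =>
          hmNBout (by rw [← h, hx])
        have h2x : ¬(x = ((l₂, m₂, p₂) : Qthr k a c)) := fun h =>
          hB (by rw [← h, hx])
        rw [show pre (((true, m, p), (l₂, m₂, p₂),
            (true, fV k a c m m₂, bthr k a c (m : ℤ) (m₂ : ℤ)),
            (false, gV k a c m m₂, bthr k a c (m : ℤ) (m₂ : ℤ))) : PTrans (Qthr k a c))
            = {((true, m, p) : Qthr k a c), (l₂, m₂, p₂)} from rfl, count_pair]
        simp only [if_neg h1x, if_neg h2x]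
        exact Nat.zero_le _
      · have h2 := Multiset.le_iff_count.1 hP x
        have hq : Multiset.count x ({A, Bout} : Multiset (Qthr k a c))
            ≤ Multiset.count x ({A, Bin} : Multiset (Qthr k a c)) := by
          rw [count_pair, count_pair, if_neg hx]
          split_ifs <;> omega
        have h3 := hcnt x
        omega
    exact hterm _ hs hleC

lemma termT2_step {C C' : Multiset (Qthr k a c)}
    (hterm : Terminal (induced (T1thr k a c)) C)
    (h : Step (induced (T2thr k a c)) C C') :
    Terminal (induced (T1thr k a c)) C' := by
  obtain ⟨t, ht, hstep⟩ := h
  rcases Finset.mem_union.1 ht with ht2 | hts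
  · rcases T2_elim k a c t ht2 with hsil | ⟨n, hcn, rfl⟩
    · obtain ⟨p, q, rfl⟩ := hsil
      rwa [StepBy_silent (show SilentT ((p, q, p, q) : PTrans (Qthr k a c)) from rfl) hstep]
    · refine term_preserve_aux k a c (T1thr k a c) (Finset.filter_subset _ _)
        (leaderpair_mem_T1 k a c) (true, n, false) (false, zeroV k a c, true)
        (false, zeroV k a c, false) rfl rfl rfl ?_ C C' hterm hstep.1 hstep.2
      intro m m₂ l₂ p p₂ h1 h2
      obtain ⟨rfl, rfl⟩ : m = n ∧ p = false := by
        simp only [Prod.mk.injEq] at h1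
        exact ⟨h1.2.1, h1.2.2⟩
      obtain ⟨rfl, rfl, rfl⟩ : l₂ = false ∧ m₂ = zeroV k a c ∧ p₂ = false := by
        simp only [Prod.mk.injEq] at h2
        exact ⟨h2.1, h2.2.1, h2.2.2⟩
      show ({((true : Bool), m, false), ((false : Bool), zeroV k a c, false)}
          : Multiset (Qthr k a c)) = _
      rw [show post (((true, m, false), ((false : Bool), zeroV k a c, false),
          (true, fV k a c m (zeroV k a c), bthr k a c (m : ℤ) ((zeroV k a c : Vr k a c) : ℤ)),
          (false, gV k a c m (zeroV k a c), bthr k a c (m : ℤ) ((zeroV k a c : Vr k a c) : ℤ)))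
          : PTrans (Qthr k a c))
          = {(true, fV k a c m (zeroV k a c), bthr k a c (m : ℤ) ((zeroV k a c : Vr k a c) : ℤ)),
             (false, gV k a c m (zeroV k a c), bthr k a c (m : ℤ) ((zeroV k a c : Vr k a c) : ℤ))}
          from rfl]
      rw [fV_zero, gV_zero, bthr_zero_ge k a c m hcn]
  · rwa [StepBy_silent (mem_silents hts) hstep]

lemma termS2_step {C C' : Multiset (Qthr k a c)}
    (hterm : Terminal (induced (S1thr k a c)) C)
    (h : Step (induced (S2thr k a c)) C C') :
    Terminal (induced (S1thr k a c)) C' := by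
  obtain ⟨t, ht, hstep⟩ := h
  rcases Finset.mem_union.1 ht with ht2 | hts
  · rcases S2_elim k a c t ht2 with hsil | ⟨n, hcn, rfl⟩
    · obtain ⟨p, q, rfl⟩ := hsil
      rwa [StepBy_silent (show SilentT ((p, q, p, q) : PTrans (Qthr k a c)) from rfl) hstep]
    · refine term_preserve_aux k a c (S1thr k a c) (Finset.filter_subset _ _)
        (leaderpair_mem_S1 k a c) (true, n, true) (false, zeroV k a c, false)
        (false, zeroV k a c, true) rfl rfl rfl ?_ C C' hterm hstep.1 hstep.2
      intro m m₂ l₂ p p₂ h1 h2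
      obtain ⟨rfl, rfl⟩ : m = n ∧ p = true := by
        simp only [Prod.mk.injEq] at h1
        exact ⟨h1.2.1, h1.2.2⟩
      obtain ⟨rfl, rfl, rfl⟩ : l₂ = false ∧ m₂ = zeroV k a c ∧ p₂ = true := by
        simp only [Prod.mk.injEq] at h2
        exact ⟨h2.1, h2.2.1, h2.2.2⟩
      show ({((true : Bool), m, true), ((false : Bool), zeroV k a c, true)}
          : Multiset (Qthr k a c)) = _
      rw [show post (((true, m, true), ((false : Bool), zeroV k a c, true),
          (true, fV k a c m (zeroV k a c), bthr k a c (m : ℤ) ((zeroV k a c : Vr k a c) : ℤ)),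
          (false, gV k a c m (zeroV k a c), bthr k a c (m : ℤ) ((zeroV k a c : Vr k a c) : ℤ)))
          : PTrans (Qthr k a c))
          = {(true, fV k a c m (zeroV k a c), bthr k a c (m : ℤ) ((zeroV k a c : Vr k a c) : ℤ)),
             (false, gV k a c m (zeroV k a c), bthr k a c (m : ℤ) ((zeroV k a c : Vr k a c) : ℤ))}
          from rfl]
      rw [fV_zero, gV_zero, bthr_zero_lt k a c m hcn]
  · rwa [StepBy_silent (mem_silents hts) hstep]

lemma termT2_reach {C C' : Multiset (Qthr k a c)}
    (hterm : Terminal (induced (T1thr k a c)) C)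
    (h : Reach (induced (T2thr k a c)) C C') :
    Terminal (induced (T1thr k a c)) C' := by
  induction h with
  | refl => exact hterm
  | tail _ hstep ih => exact termT2_step k a c ih hstep

lemma termS2_reach {C C' : Multiset (Qthr k a c)}
    (hterm : Terminal (induced (S1thr k a c)) C)
    (h : Reach (induced (S2thr k a c)) C C') :
    Terminal (induced (S1thr k a c)) C' := by
  induction h with
  | refl => exact hterm
  | tail _ hstep ih => exact termS2_step k a c ih hstep

lemma T1_nonempty : (T1thr k a c).Nonempty := by
  refine ⟨((false, zeroV k a c, false), (false, zeroV k a c, false),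
    (false, zeroV k a c, false), (false, zeroV k a c, false)), ?_⟩
  refine Finset.mem_filter.2 ⟨Finset.mem_filter.2 ⟨Finset.mem_univ _, Or.inr ⟨_, _, rfl⟩⟩, ?_⟩
  intro q hq r hr heq
  rw [L0set, Finset.mem_filter] at hq
  have heq' : ({((false : Bool), zeroV k a c, false), ((false : Bool), zeroV k a c, false)}
      : Multiset (Qthr k a c)) = {q, r} := heq
  rcases pair_eq_pair'.1 heq' with ⟨e1, e2⟩ | ⟨e1, e2⟩
  · rw [← e1] at hq
    simp at hq
  · rw [← e2] at hq
    simp at hq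

lemma S1_nonempty : (S1thr k a c).Nonempty := by
  refine ⟨((false, zeroV k a c, false), (false, zeroV k a c, false),
    (false, zeroV k a c, false), (false, zeroV k a c, false)), ?_⟩
  refine Finset.mem_filter.2 ⟨Finset.mem_filter.2 ⟨Finset.mem_univ _, Or.inr ⟨_, _, rfl⟩⟩, ?_⟩
  intro q hq r hr heq
  rw [L1set, Finset.mem_filter] at hq
  have heq' : ({((false : Bool), zeroV k a c, false), ((false : Bool), zeroV k a c, false)}
      : Multiset (Qthr k a c)) = {q, r} := heq
  rcases pair_eq_pair'.1 heq' with ⟨e1, e2⟩ | ⟨e1, e2⟩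
  · rw [← e1] at hq
    simp at hq
  · rw [← e2] at hq
    simp at hq

/-- the value `vmax` of the value range -/
def vmaxV : Vr k a c :=
  ⟨vmax k a c, Finset.mem_Icc.2 ⟨by have := vmax_pos k a c; omega, le_rfl⟩⟩

/-- the value `-vmax` of the value range -/
def negvmaxV : Vr k a c :=
  ⟨-vmax k a c, Finset.mem_Icc.2 ⟨le_rfl, by have := vmax_pos k a c; omega⟩⟩

lemma T2_nonempty : (T2thr k a c).Nonempty := by
  refine ⟨((true, vmaxV k a c, false), (false, zeroV k a c, true),
    (true, fV k a c (vmaxV k a c) (zeroV k a c),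
      bthr k a c ((vmaxV k a c : Vr k a c) : ℤ) ((zeroV k a c : Vr k a c) : ℤ)),
    (false, gV k a c (vmaxV k a c) (zeroV k a c),
      bthr k a c ((vmaxV k a c : Vr k a c) : ℤ) ((zeroV k a c : Vr k a c) : ℤ))), ?_⟩
  rw [T2thr, Finset.mem_sdiff]
  have hmemT : ((true, vmaxV k a c, false), ((false : Bool), zeroV k a c, true),
      (true, fV k a c (vmaxV k a c) (zeroV k a c),
        bthr k a c ((vmaxV k a c : Vr k a c) : ℤ) ((zeroV k a c : Vr k a c) : ℤ)),
      (false, gV k a c (vmaxV k a c) (zeroV k a c),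
        bthr k a c ((vmaxV k a c : Vr k a c) : ℤ) ((zeroV k a c : Vr k a c) : ℤ)))
      ∈ Tthr k a c :=
    Finset.mem_filter.2 ⟨Finset.mem_univ _,
      Or.inl ⟨vmaxV k a c, zeroV k a c, false, false, true, rfl⟩⟩
  refine ⟨hmemT, fun hmem => ?_⟩
  have hV := abs_c_lt_vmax k a c
  have hc := le_abs_self c
  refine (Finset.mem_filter.1 hmem).2 (true, vmaxV k a c, false) ?_
    (false, zeroV k a c, true) ?_ rfl
  · exact Finset.mem_filter.2 ⟨Finset.mem_univ _, rfl, rfl, by show c ≤ vmax k a c; omega,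
      by show (vmax k a c : ℤ) ≤ vmax k a c; exact le_rfl⟩
  · simp [N1set]

lemma S2_nonempty : (S2thr k a c).Nonempty := by
  refine ⟨((true, negvmaxV k a c, true), (false, zeroV k a c, false),
    (true, fV k a c (negvmaxV k a c) (zeroV k a c),
      bthr k a c ((negvmaxV k a c : Vr k a c) : ℤ) ((zeroV k a c : Vr k a c) : ℤ)),
    (false, gV k a c (negvmaxV k a c) (zeroV k a c),
      bthr k a c ((negvmaxV k a c : Vr k a c) : ℤ) ((zeroV k a c : Vr k a c) : ℤ))), ?_⟩
  rw [S2thr, Finset.mem_sdiff]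
  have hmemT : ((true, negvmaxV k a c, true), ((false : Bool), zeroV k a c, false),
      (true, fV k a c (negvmaxV k a c) (zeroV k a c),
        bthr k a c ((negvmaxV k a c : Vr k a c) : ℤ) ((zeroV k a c : Vr k a c) : ℤ)),
      (false, gV k a c (negvmaxV k a c) (zeroV k a c),
        bthr k a c ((negvmaxV k a c : Vr k a c) : ℤ) ((zeroV k a c : Vr k a c) : ℤ)))
      ∈ Tthr k a c :=
    Finset.mem_filter.2 ⟨Finset.mem_univ _,
      Or.inl ⟨negvmaxV k a c, zeroV k a c, false, true, false, rfl⟩⟩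
  refine ⟨hmemT, fun hmem => ?_⟩
  have hV := abs_c_lt_vmax k a c
  have hc := neg_abs_le c
  refine (Finset.mem_filter.1 hmem).2 (true, negvmaxV k a c, true) ?_
    (false, zeroV k a c, false) ?_ rfl
  · exact Finset.mem_filter.2 ⟨Finset.mem_univ _, rfl, rfl,
      by show -vmax k a c ≤ (-vmax k a c : ℤ); exact le_rfl,
      by show (-vmax k a c : ℤ) < c; omega⟩
  · simp [N0set]

lemma witnessT : LayeredWitness (Pthr k a c) 2 ![T1thr k a c, T2thr k a c] := by
  refine ⟨?_, ?_, ?_, ?_⟩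
  · intro i
    fin_cases i
    · exact T1_nonempty k a c
    · exact T2_nonempty k a c
  · intro i j hij
    fin_cases i <;> fin_cases j
    · exact absurd rfl hij
    · exact Finset.disjoint_sdiff
    · exact Finset.sdiff_disjoint
    · exact absurd rfl hij
  · ext t
    simp only [Finset.mem_biUnion, Finset.mem_univ, true_and]
    constructor
    · rintro ⟨i, hi⟩
      fin_cases i
      · have h : t ∈ T1thr k a c := hi
        exact (Finset.mem_filter.1 h).1
      · have h : t ∈ T2thr k a c := hi
        exact (Finset.mem_sdiff.1 h).1
    · intro ht
      by_cases h1 : t ∈ T1thr k a c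
      · exact ⟨0, h1⟩
      · exact ⟨1, Finset.mem_sdiff.2 ⟨ht, h1⟩⟩
  · intro i
    fin_cases i
    · refine ⟨?_, ?_⟩
      · intro e hexec
        exact silentExec_of_measure (Wsum (wT1 k a c) (e 0)) e
          (fun i => stepT1_measure k a c (hexec.2 i)) le_rfl
      · intro C C' hcard hreach hterm
        intro u hu hp
        rcases Finset.mem_union.1 hu with h | h
        · exfalso
          obtain ⟨j, hj, -⟩ := Finset.mem_biUnion.1 h
          have hlt := (Finset.mem_filter.1 hj).2
          rw [Fin.lt_def] at hlt
          exact Nat.not_lt_zero _ hlt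
        · exact mem_silents h
    · refine ⟨?_, ?_⟩
      · intro e hexec
        exact silentExec_of_measure (Wsum (w2T k a c) (e 0)) e
          (fun i => stepT2_measure k a c (hexec.2 i)) le_rfl
      · intro C C' hcard hreach hterm
        have hfil : (Finset.univ.filter fun j : Fin 2 => j < (1 : Fin 2)) = {(0 : Fin 2)} := by
          decide
        have hset : ((Finset.univ.filter fun j : Fin 2 => j < (1 : Fin 2)).biUnion
            ![T1thr k a c, T2thr k a c]) = T1thr k a c := by
          rw [hfil, Finset.singleton_biUnion]
          rfl
        have hterm' : Terminal (induced ((Finset.univ.filter fun j : Fin 2 => j < (1 : Fin 2)).biUnion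
            ![T1thr k a c, T2thr k a c])) C := hterm
        have hreach' : Reach (induced (T2thr k a c)) C C' := hreach
        show Terminal (induced ((Finset.univ.filter fun j : Fin 2 => j < (1 : Fin 2)).biUnion
            ![T1thr k a c, T2thr k a c])) C'
        rw [hset] at hterm' ⊢
        exact termT2_reach k a c hterm' hreach'

lemma witnessS : LayeredWitness (Pthr k a c) 2 ![S1thr k a c, S2thr k a c] := by
  refine ⟨?_, ?_, ?_, ?_⟩
  · intro i
    fin_cases i
    · exact S1_nonempty k a c
    · exact S2_nonempty k a c
  · intro i j hij
    fin_cases i <;> fin_cases j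
    · exact absurd rfl hij
    · exact Finset.disjoint_sdiff
    · exact Finset.sdiff_disjoint
    · exact absurd rfl hij
  · ext t
    simp only [Finset.mem_biUnion, Finset.mem_univ, true_and]
    constructor
    · rintro ⟨i, hi⟩
      fin_cases i
      · have h : t ∈ S1thr k a c := hi
        exact (Finset.mem_filter.1 h).1
      · have h : t ∈ S2thr k a c := hi
        exact (Finset.mem_sdiff.1 h).1
    · intro ht
      by_cases h1 : t ∈ S1thr k a c
      · exact ⟨0, h1⟩
      · exact ⟨1, Finset.mem_sdiff.2 ⟨ht, h1⟩⟩
  · intro i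
    fin_cases i
    · refine ⟨?_, ?_⟩
      · intro e hexec
        exact silentExec_of_measure (Wsum (wS1 k a c) (e 0)) e
          (fun i => stepS1_measure k a c (hexec.2 i)) le_rfl
      · intro C C' hcard hreach hterm
        intro u hu hp
        rcases Finset.mem_union.1 hu with h | h
        · exfalso
          obtain ⟨j, hj, -⟩ := Finset.mem_biUnion.1 h
          have hlt := (Finset.mem_filter.1 hj).2
          rw [Fin.lt_def] at hlt
          exact Nat.not_lt_zero _ hlt
        · exact mem_silents h
    · refine ⟨?_, ?_⟩
      · intro e hexec
        exact silentExec_of_measure (Wsum (w2S k a c) (e 0)) e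
          (fun i => stepS2_measure k a c (hexec.2 i)) le_rfl
      · intro C C' hcard hreach hterm
        have hfil : (Finset.univ.filter fun j : Fin 2 => j < (1 : Fin 2)) = {(0 : Fin 2)} := by
          decide
        have hset : ((Finset.univ.filter fun j : Fin 2 => j < (1 : Fin 2)).biUnion
            ![S1thr k a c, S2thr k a c]) = S1thr k a c := by
          rw [hfil, Finset.singleton_biUnion]
          rfl
        have hterm' : Terminal (induced ((Finset.univ.filter fun j : Fin 2 => j < (1 : Fin 2)).biUnion
            ![S1thr k a c, S2thr k a c])) C := hterm
        have hreach' : Reach (induced (S2thr k a c)) C C' := hreach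
        show Terminal (induced ((Finset.univ.filter fun j : Fin 2 => j < (1 : Fin 2)).biUnion
            ![S1thr k a c, S2thr k a c])) C'
        rw [hset] at hterm' ⊢
        exact termS2_reach k a c hterm' hreach'

end ThresholdProofs

end PopProt
open PopProt in
/-- Proposition: the threshold protocol `P_thr` satisfies LayeredTermination;
for `c > 0` it is witnessed by the ordered partition `(T₁, T₂)` and for `c ≤ 0`
by the ordered partition `(S₁, S₂)`. -/
theorem threshold_layeredTermination
    (k : ℕ) (a : Fin k → ℤ) (c : ℤ) (hk : 1 ≤ k) :
    LayeredTermination (Pthr k a c) ∧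
    (0 < c → LayeredWitness (Pthr k a c) 2 ![T1thr k a c, T2thr k a c]) ∧
    (c ≤ 0 → LayeredWitness (Pthr k a c) 2 ![S1thr k a c, S2thr k a c]) := by
  refine ⟨?_, fun _ => witnessT k a c, fun _ => witnessS k a c⟩
  rcases le_or_gt c 0 with h | h
  · exact ⟨2, ![S1thr k a c, S2thr k a c], witnessS k a c⟩
  · exact ⟨2, ![T1thr k a c, T2thr k a c], witnessT k a c⟩
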